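/- Let q ≥ 1 and let i, j be integers with 1 ≤ i, j ≤ 2^q. If the string id(i) pointwise dominates id(j), i.e. for every position p with 1 ≤ p ≤ 4q+2, id(j)(p) = 1 implies id(i)(p) = 1, then i = j. -/
import Mathlib


/-- The `q`-bit binary representation of `i` (bit `p` is `i.testBit p`);
this is an injective `q`-bit encoding of the range `1 ≤ i ≤ 2^q`
(with `nb(2^q) = 0⋯0`). -/
def nbStr (q i : ℕ) : List Bool := (List.range q).map i.testBit

/-- `id(i) = 1 · nb(i) · (nb(i))̄ · ((nb(i))̄)^R · (nb(i))^R · 1`, a string of length `4q+2`. -/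
def idStr (q i : ℕ) : List Bool :=
  [true] ++ nbStr q i ++ (nbStr q i).map (! ·) ++ ((nbStr q i).map (! ·)).reverse
    ++ (nbStr q i).reverse ++ [true]

lemma nb_len (q i : ℕ) : (nbStr q i).length = q := by simp [nbStr]

lemma getD_nb (q i k : ℕ) (hk : k < q) : (idStr q i).getD (1+k) false = i.testBit k := by
  simp only [idStr, List.append_assoc, List.singleton_append, List.getD_cons_succ,
    Nat.add_comm 1 k]
  rw [List.getD_append _ _ _ _ (by simp [nb_len, hk])]
  simp [nbStr, List.getD, hk]

lemma getD_comp (q i k : ℕ) (hk : k < q) : (idStr q i).getD (1+q+k) false = ! i.testBit k := by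
  have h : 1+q+k = (q+k)+1 := by omega
  rw [h]
  simp only [idStr, List.append_assoc, List.singleton_append, List.getD_cons_succ]
  rw [List.getD_append_right _ _ _ _ (by simp [nb_len])]
  rw [List.getD_append _ _ _ _ (by simp [nb_len]; omega)]
  simp [nbStr, List.getD, hk, nb_len]

/-- If `id(i)` pointwise dominates `id(j)` (wherever `id(j)` has a `1`, so does `id(i)`),
then `i = j`. -/
theorem idStr_dominates_inj (q i j : ℕ) (hq : 1 ≤ q)
    (hi1 : 1 ≤ i) (hi2 : i ≤ 2 ^ q) (hj1 : 1 ≤ j) (hj2 : j ≤ 2 ^ q)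
    (hdom : ∀ p, (idStr q j).getD p false = true → (idStr q i).getD p false = true) :
    i = j := by
  have hbit : ∀ k, k < q → i.testBit k = j.testBit k := by
    intro k hk
    have h1 := hdom (1+k)
    rw [getD_nb q i k hk, getD_nb q j k hk] at h1
    have h2 := hdom (1+q+k)
    rw [getD_comp q i k hk, getD_comp q j k hk] at h2
    cases hjk : j.testBit k with
    | true => exact h1 hjk
    | false => simpa [hjk] using h2
  have hmod : i % 2 ^ q = j % 2 ^ q := by
    apply Nat.eq_of_testBit_eq
    intro k
    rw [Nat.testBit_mod_two_pow, Nat.testBit_mod_two_pow]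
    by_cases hk : k < q
    · simp [hk, hbit k hk]
    · simp [hk]
  have hi : i = i % 2 ^ q ∨ (i = 2 ^ q ∧ i % 2 ^ q = 0) := by
    rcases lt_or_eq_of_le hi2 with h | h
    · left; exact (Nat.mod_eq_of_lt h).symm
    · right; exact ⟨h, by simp [← h]⟩
  have hj : j = j % 2 ^ q ∨ (j = 2 ^ q ∧ j % 2 ^ q = 0) := by
    rcases lt_or_eq_of_le hj2 with h | h
    · left; exact (Nat.mod_eq_of_lt h).symm
    · right; exact ⟨h, by simp [← h]⟩
  rcases hi with hi | ⟨hi, hi0⟩ <;> rcases hj with hj | ⟨hj, hj0⟩ <;> omega
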